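/- Let n ≥ 2 be an integer. For every function f : V(S_n) → ℝ one has Var_1(M_{S_n} f) ≤ (1 − 1/n) · Var_1 f. Moreover, equality holds for the delta function f = δ_{a_2}, so the best constant C_{S_n,1} := sup{ Var_1(M_{S_n} f)/Var_1 f : Var_1 f > 0 } equals 1 − 1/n. -/

import Mathlib

open scoped Classical

/-- The ball of radius `r` around `e` in the graph metric of `G`
(only vertices reachable from `e` are at finite distance). -/
noncomputable def gball {V : Type*} [Fintype V] (G : SimpleGraph V) (e : V) (r : ℕ) :
    Finset V :=
  Finset.univ.filter fun m => G.Reachable e m ∧ G.dist e m ≤ r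

/-- The centered Hardy–Littlewood maximal function on a finite graph. -/
noncomputable def mxHL {V : Type*} [Fintype V] (G : SimpleGraph V) (f : V → ℝ) (e : V) : ℝ :=
  ⨆ r : ℕ, (1 / ((gball G e r).card : ℝ)) * ∑ m ∈ gball G e r, |f m|

/-- The fractional centered Hardy–Littlewood maximal function on a finite graph. -/
noncomputable def mxFr {V : Type*} [Fintype V] (G : SimpleGraph V) (α : ℝ) (f : V → ℝ)
    (e : V) : ℝ :=
  ⨆ r : ℕ, ((gball G e r).card : ℝ) ^ (α - 1) * ∑ m ∈ gball G e r, |f m|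

/-- The `p`-variation of `f : V → ℝ` with respect to the graph `G`
(vertices at distance `1` are exactly the adjacent ones). -/
noncomputable def vp {V : Type*} [Fintype V] (G : SimpleGraph V) (p : ℝ) (f : V → ℝ) : ℝ :=
  ((1 / 2) * ∑ v : V, ∑ w : V, if G.Adj v w then |f v - f w| ^ p else 0) ^ (1 / p)

/-- The star graph on `Fin n`, with center the vertex with value `0`. -/
def starG (n : ℕ) : SimpleGraph (Fin n) where
  Adj v w := v ≠ w ∧ (v.val = 0 ∨ w.val = 0)
  symm := ⟨fun _ _ h => ⟨h.1.symm, h.2.symm⟩⟩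
  loopless := ⟨fun _ h => h.1 rfl⟩

/-- The `ℓ²` norm of a function on a finite vertex set. -/
noncomputable def nrm2 {V : Type*} [Fintype V] (g : V → ℝ) : ℝ :=
  Real.sqrt (∑ v : V, g v ^ 2)

/-- sum of positive parts of truncations -/
lemma sum_posPart_le {ι : Type*} [DecidableEq ι] (I : Finset ι) (p : ι → ℝ) (hp : ∀ i ∈ I, 0 ≤ p i)
    (D : ℝ) (hD : 0 ≤ D) :
    ∑ i ∈ I, max (p i - D) 0 ≤ max ((∑ i ∈ I, p i) - D) 0 := by
  by_cases h : ∃ j ∈ I, 0 < p j - D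
  · obtain ⟨j, hj, hjD⟩ := h
    have e1 : ∑ i ∈ I, max (p i - D) 0
        = max (p j - D) 0 + ∑ i ∈ I.erase j, max (p i - D) 0 :=
      (Finset.add_sum_erase I _ hj).symm
    have e2 : ∑ i ∈ I, p i = p j + ∑ i ∈ I.erase j, p i :=
      (Finset.add_sum_erase I p hj).symm
    have h2 : ∑ i ∈ I.erase j, max (p i - D) 0 ≤ ∑ i ∈ I.erase j, p i := by
      apply Finset.sum_le_sum
      intro i hi
      have := hp i (Finset.mem_of_mem_erase hi)
      exact max_le (by linarith) this
    have h3 : max (p j - D) 0 = p j - D := max_eq_left hjD.le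
    have h4 := le_max_left ((∑ i ∈ I, p i) - D) (0:ℝ)
    linarith
  · push_neg at h
    have : ∑ i ∈ I, max (p i - D) 0 = 0 :=
      Finset.sum_eq_zero fun i hi => max_eq_right (by linarith [h i hi])
    rw [this]
    exact le_max_right _ _

/-- The key star-graph inequality. -/
lemma key_ineq {ι : Type*} (I : Finset ι) (n : ℕ) (hn : 2 ≤ n) (hI : (I.card : ℝ) = (n : ℝ) - 1)
    (a : ι → ℝ) (ha : ∀ i ∈ I, 0 ≤ a i) (b : ℝ) (hb : 0 ≤ b) :
    ∑ i ∈ I, |max (a i) (max ((a i + b)/2) ((b + ∑ j ∈ I, a j)/n))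
        - max b ((b + ∑ j ∈ I, a j)/n)|
      ≤ (1 - 1/(n:ℝ)) * ∑ i ∈ I, |a i - b| := by
  classical
  have hn0 : (0:ℝ) < n := by positivity
  have hn2 : (2:ℝ) ≤ n := by exact_mod_cast hn
  set A : ℝ := (b + ∑ j ∈ I, a j)/n with hA
  set P : ℝ := ∑ i ∈ I, max (a i - b) 0 with hPdef
  set Q : ℝ := ∑ i ∈ I, max (b - a i) 0 with hQdef
  have hP : 0 ≤ P := Finset.sum_nonneg fun i _ => le_max_right _ _
  have hQ : 0 ≤ Q := Finset.sum_nonneg fun i _ => le_max_right _ _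
  have habs : ∑ i ∈ I, |a i - b| = P + Q := by
    rw [hPdef, hQdef, ← Finset.sum_add_distrib]
    apply Finset.sum_congr rfl
    intro i _
    rcases le_total (a i) b with h | h
    · rw [abs_of_nonpos (by linarith), max_eq_right (by linarith), max_eq_left (by linarith)]
      ring
    · rw [abs_of_nonneg (by linarith), max_eq_left (by linarith), max_eq_right (by linarith)]
      ring
  have hsum : ∑ j ∈ I, a j = ((n:ℝ)-1)*b + P - Q := by
    have e : ∑ i ∈ I, (a i - b) = P - Q := by
      rw [hPdef, hQdef, ← Finset.sum_sub_distrib]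
      apply Finset.sum_congr rfl
      intro i _
      rcases le_total (a i) b with h | h
      · rw [max_eq_right (by linarith), max_eq_left (by linarith)]; ring
      · rw [max_eq_left (by linarith), max_eq_right (by linarith)]; ring
    rw [Finset.sum_sub_distrib, Finset.sum_const, nsmul_eq_mul, hI] at e
    linarith
  have hAb : A - b = (P - Q)/n := by
    rw [hA, hsum]; field_simp; ring
  rw [habs]
  rcases le_total A b with hcase | hcase
  · -- case A ≤ b
    have hMz : max b A = b := max_eq_left hcase
    have hterm : ∀ i ∈ I, |max (a i) (max ((a i + b)/2) A) - max b A|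
        ≤ max (a i - b) 0 + (b - A) := by
      intro i hi
      rw [hMz]
      rcases le_total b (a i) with h1 | h1
      · have hm : max (a i) (max ((a i + b)/2) A) = a i :=
          max_eq_left (max_le (by linarith) (by linarith))
        rw [hm, abs_of_nonneg (by linarith), max_eq_left (by linarith)]
        linarith
      · have hle : max (a i) (max ((a i + b)/2) A) ≤ b :=
          max_le (by linarith) (max_le (by linarith) hcase)
        have hge : A ≤ max (a i) (max ((a i + b)/2) A) :=
          le_max_of_le_right (le_max_right _ _)
        have h4 := le_max_right (a i - b) (0:ℝ)
        rw [abs_of_nonpos (by linarith)]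
        linarith
    calc ∑ i ∈ I, |max (a i) (max ((a i + b)/2) A) - max b A|
        ≤ ∑ i ∈ I, (max (a i - b) 0 + (b - A)) := Finset.sum_le_sum hterm
      _ = P + (I.card : ℝ) * (b - A) := by
          rw [Finset.sum_add_distrib, Finset.sum_const, nsmul_eq_mul, hPdef]
      _ ≤ (1 - 1/(n:ℝ)) * (P + Q) := by
          rw [hI]
          have hQP : (P - Q)/n ≤ 0 := by linarith
          have hQP' : P ≤ Q := by
            by_contra hc
            push_neg at hc
            have : 0 < (P - Q)/n := div_pos (by linarith) hn0
            linarith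
          have expand : (1 - 1/(n:ℝ)) * (P + Q) - (P + ((n:ℝ)-1) * (b - A))
              = ((n:ℝ)-2) * P / n := by
            have : b - A = -((P - Q)/n) := by linarith
            rw [this]
            field_simp
            ring
          have hnn : 0 ≤ ((n:ℝ)-2) * P / n :=
            div_nonneg (mul_nonneg (by linarith) hP) hn0.le
          linarith
  · -- case b ≤ A
    have hMz : max b A = A := max_eq_right hcase
    have hD : 0 ≤ A - b := by linarith
    have hterm : ∀ i ∈ I, |max (a i) (max ((a i + b)/2) A) - max b A|
        ≤ max (max (a i - b) 0 - (A - b)) 0 := by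
      intro i hi
      rw [hMz]
      have hge : A ≤ max (a i) (max ((a i + b)/2) A) :=
        le_max_of_le_right (le_max_right _ _)
      rw [abs_of_nonneg (by linarith)]
      rcases le_total (a i) b with h1 | h1
      · have hle : max (a i) (max ((a i + b)/2) A) ≤ A :=
          max_le (by linarith) (max_le (by linarith) le_rfl)
        have := le_max_right (max (a i - b) 0 - (A - b)) (0:ℝ)
        linarith
      · have hm : max (a i) (max ((a i + b)/2) A) = max (a i) A := by
          rw [← max_assoc, max_eq_left (by linarith : (a i + b)/2 ≤ a i)]
        rw [hm]
        rcases le_total (a i) A with h2 | h2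
        · rw [max_eq_right h2]
          have := le_max_right (max (a i - b) 0 - (A - b)) (0:ℝ)
          linarith
        · rw [max_eq_left h2, max_eq_left (by linarith : (0:ℝ) ≤ a i - b)]
          have : a i - A ≤ a i - b - (A - b) := by linarith
          exact le_trans this (le_max_left _ _)
    calc ∑ i ∈ I, |max (a i) (max ((a i + b)/2) A) - max b A|
        ≤ ∑ i ∈ I, max (max (a i - b) 0 - (A - b)) 0 := Finset.sum_le_sum hterm
      _ ≤ max (P - (A - b)) 0 := by
          rw [hPdef]
          exact sum_posPart_le I _ (fun i _ => le_max_right _ _) _ hD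
      _ ≤ (1 - 1/(n:ℝ)) * (P + Q) := by
          have hQP : 0 ≤ (P - Q)/n := by linarith
          have hQP' : Q ≤ P := by
            by_contra hc
            push_neg at hc
            have : (P - Q)/n < 0 := div_neg_of_neg_of_pos (by linarith) hn0
            linarith
          apply max_le
          · have expand : (1 - 1/(n:ℝ)) * (P + Q) - (P - (A - b))
                = ((n:ℝ)-2) * Q / n := by
              rw [hAb]
              field_simp
              ring
            have hnn : 0 ≤ ((n:ℝ)-2) * Q / n :=
              div_nonneg (mul_nonneg (by linarith) hQ) hn0.le
            linarith
          · apply mul_nonneg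
            · have : 1/(n:ℝ) ≤ 1/2 := by
                apply one_div_le_one_div_of_le <;> linarith
              linarith
            · linarith

section star
variable {n : ℕ}

lemma star_adj (v w : Fin n) : (starG n).Adj v w ↔ v ≠ w ∧ (v.val = 0 ∨ w.val = 0) :=
  Iff.rfl

lemma star_reach (hn : 2 ≤ n) (e m : Fin n) : (starG n).Reachable e m := by
  have h0 : (0:ℕ) < n := by omega
  have key : ∀ v : Fin n, (starG n).Reachable ⟨0, h0⟩ v := by
    intro v
    rcases eq_or_ne (⟨0, h0⟩ : Fin n) v with h | hv
    · rw [h]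
    · exact SimpleGraph.Adj.reachable ⟨hv, Or.inl rfl⟩
  exact ((key e).symm).trans (key m)

lemma star_dist_le_two (hn : 2 ≤ n) (e m : Fin n) : (starG n).dist e m ≤ 2 := by
  have h0 : (0:ℕ) < n := by omega
  by_cases hem : e = m
  · rw [hem, SimpleGraph.dist_self]; omega
  by_cases he : e.val = 0
  · have : (starG n).dist e m = 1 :=
      SimpleGraph.dist_eq_one_iff_adj.mpr ⟨hem, Or.inl he⟩
    omega
  by_cases hm : m.val = 0
  · have : (starG n).dist e m = 1 :=
      SimpleGraph.dist_eq_one_iff_adj.mpr ⟨hem, Or.inr hm⟩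
    omega
  · have h1 : (starG n).Adj e ⟨0, h0⟩ := ⟨fun h => he (by rw [h]), Or.inr rfl⟩
    have h2 : (starG n).Adj (⟨0, h0⟩ : Fin n) m := ⟨fun h => hm (by rw [← h]), Or.inl rfl⟩
    have hw := SimpleGraph.dist_le
      (SimpleGraph.Walk.cons h1 (SimpleGraph.Walk.cons h2 SimpleGraph.Walk.nil))
    simpa using hw

lemma gball_zero (e : Fin n) : gball (starG n) e 0 = {e} := by
  ext m
  simp only [gball, Finset.mem_filter, Finset.mem_univ, true_and, Finset.mem_singleton,
    Nat.le_zero]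
  constructor
  · rintro ⟨hr, hd⟩
    exact (hr.dist_eq_zero_iff.mp hd).symm
  · rintro rfl
    exact ⟨SimpleGraph.Reachable.refl _, by rw [SimpleGraph.dist_self]⟩

lemma gball_big (hn : 2 ≤ n) (e : Fin n) (r : ℕ) (hr : 2 ≤ r) :
    gball (starG n) e r = Finset.univ := by
  ext m
  simp only [gball, Finset.mem_filter, Finset.mem_univ, true_and, iff_true]
  exact ⟨star_reach hn e m, le_trans (star_dist_le_two hn e m) hr⟩

lemma gball_center_one (hn : 2 ≤ n) (r : ℕ) (hr : 1 ≤ r) :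
    gball (starG n) ⟨0, by omega⟩ r = Finset.univ := by
  ext m
  simp only [gball, Finset.mem_filter, Finset.mem_univ, true_and, iff_true]
  refine ⟨star_reach hn _ m, ?_⟩
  by_cases hm : (⟨0, by omega⟩ : Fin n) = m
  · rw [hm, SimpleGraph.dist_self]; omega
  · have : (starG n).dist (⟨0, by omega⟩ : Fin n) m = 1 :=
      SimpleGraph.dist_eq_one_iff_adj.mpr ⟨hm, Or.inl rfl⟩
    omega

lemma gball_leaf_one (hn : 2 ≤ n) (v : Fin n) (hv : v ≠ ⟨0, by omega⟩) :
    gball (starG n) v 1 = {v, ⟨0, by omega⟩} := by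
  ext m
  simp only [gball, Finset.mem_filter, Finset.mem_univ, true_and, Finset.mem_insert,
    Finset.mem_singleton]
  constructor
  · rintro ⟨hr, hd⟩
    interval_cases h : (starG n).dist v m
    · exact Or.inl (hr.dist_eq_zero_iff.mp h).symm
    · have hadj : (starG n).Adj v m := SimpleGraph.dist_eq_one_iff_adj.mp h
      rcases hadj.2 with h0 | h0
      · exact absurd (Fin.val_injective h0 : v = ⟨0, by omega⟩) hv
      · exact Or.inr (Fin.val_injective h0)
  · rintro (rfl | rfl)
    · exact ⟨SimpleGraph.Reachable.refl _, by rw [SimpleGraph.dist_self]; omega⟩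
    · have : (starG n).dist v ⟨0, by omega⟩ = 1 :=
        SimpleGraph.dist_eq_one_iff_adj.mpr ⟨hv, Or.inr rfl⟩
      exact ⟨star_reach hn _ _, by omega⟩

lemma iSup_eq_max3 (g : ℕ → ℝ) (a b c : ℝ) (h0 : g 0 = a) (h1 : g 1 = b)
    (h2 : ∀ r, 2 ≤ r → g r = c) : (⨆ r, g r) = max a (max b c) := by
  have hb : ∀ r, g r ≤ max a (max b c) := by
    intro r
    match r with
    | 0 => rw [h0]; exact le_max_left _ _
    | 1 => rw [h1]; exact le_max_of_le_right (le_max_left _ _)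
    | (r+2) => rw [h2 (r+2) (by omega)]; exact le_max_of_le_right (le_max_right _ _)
  have hbdd : BddAbove (Set.range g) := ⟨max a (max b c), by rintro x ⟨r, rfl⟩; exact hb r⟩
  apply le_antisymm (ciSup_le hb)
  exact max_le (h0 ▸ le_ciSup hbdd 0)
    (max_le (h1 ▸ le_ciSup hbdd 1) ((h2 2 le_rfl) ▸ le_ciSup hbdd 2))

lemma mxHL_center (hn : 2 ≤ n) (f : Fin n → ℝ) :
    mxHL (starG n) f ⟨0, by omega⟩
      = max |f ⟨0, by omega⟩| ((∑ m : Fin n, |f m|) / n) := by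
  rw [mxHL]
  rw [iSup_eq_max3 _ |f ⟨0, by omega⟩| ((∑ m : Fin n, |f m|) / n) ((∑ m : Fin n, |f m|) / n)]
  · rw [max_self]
  · rw [gball_zero]
    simp
  · rw [gball_center_one hn 1 le_rfl, Finset.card_univ, Fintype.card_fin, one_div_mul_eq_div]
  · intro r hr
    rw [gball_big hn _ r hr, Finset.card_univ, Fintype.card_fin, one_div_mul_eq_div]

lemma mxHL_leaf (hn : 2 ≤ n) (f : Fin n → ℝ) (v : Fin n) (hv : v ≠ ⟨0, by omega⟩) :
    mxHL (starG n) f v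
      = max |f v| (max ((|f v| + |f ⟨0, by omega⟩|) / 2) ((∑ m : Fin n, |f m|) / n)) := by
  rw [mxHL]
  rw [iSup_eq_max3 _ |f v| ((|f v| + |f ⟨0, by omega⟩|) / 2) ((∑ m : Fin n, |f m|) / n)]
  · rw [gball_zero]
    simp
  · rw [gball_leaf_one hn v hv, Finset.card_pair hv, Finset.sum_pair hv]
    push_cast
    ring
  · intro r hr
    rw [gball_big hn _ r hr, Finset.card_univ, Fintype.card_fin, one_div_mul_eq_div]

lemma vp_star (hn : 2 ≤ n) (f : Fin n → ℝ) :
    vp (starG n) 1 f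
      = ∑ v ∈ Finset.univ.erase (⟨0, by omega⟩ : Fin n), |f v - f ⟨0, by omega⟩| := by
  have h0 : (0:ℕ) < n := by omega
  set z : Fin n := ⟨0, h0⟩ with hz
  rw [vp]
  rw [show (1:ℝ)/1 = 1 by norm_num, Real.rpow_one]
  have hsplit : ∀ v w : Fin n, (if (starG n).Adj v w then |f v - f w| ^ (1:ℝ) else 0)
      = (if v = z ∧ w ≠ z then |f w - f z| else 0)
        + (if w = z ∧ v ≠ z then |f v - f z| else 0) := by
    intro v w
    have hvz : v.val = 0 ↔ v = z := ⟨fun h => Fin.val_injective h, fun h => h ▸ rfl⟩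
    have hwz : w.val = 0 ↔ w = z := ⟨fun h => Fin.val_injective h, fun h => h ▸ rfl⟩
    rcases eq_or_ne v z with rfl | hv
    · rcases eq_or_ne w z with rfl | hw
      · rw [if_neg (fun h => h.1 rfl), if_neg (fun h => h.2 h.1)]
        norm_num
      · rw [if_pos ⟨fun h => hw h.symm, Or.inl rfl⟩, if_pos ⟨rfl, hw⟩,
          if_neg (fun h => hw h.1), Real.rpow_one, abs_sub_comm]
        ring
    · rcases eq_or_ne w z with rfl | hw
      · rw [if_pos ⟨hv, Or.inr rfl⟩, if_neg (fun h => hv h.1), if_pos ⟨rfl, hv⟩,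
          Real.rpow_one]
        ring
      · rw [if_neg, if_neg (fun h => hv h.1), if_neg (fun h => hw h.1)]
        · norm_num
        · rintro ⟨-, h | h⟩
          · exact hv (hvz.mp h)
          · exact hw (hwz.mp h)
  calc (1:ℝ)/2 * ∑ v : Fin n, ∑ w : Fin n, (if (starG n).Adj v w then |f v - f w| ^ (1:ℝ) else 0)
      = 1/2 * ∑ v : Fin n, ∑ w : Fin n,
          ((if v = z ∧ w ≠ z then |f w - f z| else 0)
            + (if w = z ∧ v ≠ z then |f v - f z| else 0)) := by
        congr 1
        exact Finset.sum_congr rfl fun v _ => Finset.sum_congr rfl fun w _ => hsplit v w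
    _ = ∑ v ∈ Finset.univ.erase z, |f v - f z| := by
        simp only [Finset.sum_add_distrib]
        have erase_eq : ∀ g : Fin n → ℝ, (∑ w : Fin n, if w ≠ z then g w else 0)
            = ∑ w ∈ Finset.univ.erase z, g w := by
          intro g
          rw [← Finset.sum_filter, Finset.filter_ne']
        have e1 : (∑ v : Fin n, ∑ w : Fin n, if v = z ∧ w ≠ z then |f w - f z| else 0)
            = ∑ w ∈ Finset.univ.erase z, |f w - f z| := by
          have inner : ∀ v : Fin n, (∑ w : Fin n, if v = z ∧ w ≠ z then |f w - f z| else 0)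
              = if v = z then ∑ w ∈ Finset.univ.erase z, |f w - f z| else 0 := by
            intro v
            rcases eq_or_ne v z with rfl | hv
            · simp only [true_and, if_true]
              exact erase_eq _
            · simp [hv]
          rw [Finset.sum_congr rfl fun v _ => inner v,
            Finset.sum_ite_eq' Finset.univ z (fun _ => ∑ w ∈ Finset.univ.erase z, |f w - f z|),
            if_pos (Finset.mem_univ z)]
        have e2 : (∑ v : Fin n, ∑ w : Fin n, if w = z ∧ v ≠ z then |f v - f z| else 0)
            = ∑ v ∈ Finset.univ.erase z, |f v - f z| := by
          have inner : ∀ v : Fin n, (∑ w : Fin n, if w = z ∧ v ≠ z then |f v - f z| else 0)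
              = if v ≠ z then |f v - f z| else 0 := by
            intro v
            have hcongr : ∀ w : Fin n, (if w = z ∧ v ≠ z then |f v - f z| else 0)
                = if w = z then (if v ≠ z then |f v - f z| else 0) else 0 := by
              intro w
              by_cases hw : w = z <;> by_cases hv : v = z <;> simp [hw, hv]
            rw [Finset.sum_congr rfl fun w _ => hcongr w,
              Finset.sum_ite_eq' Finset.univ z (fun _ => if v ≠ z then |f v - f z| else 0),
              if_pos (Finset.mem_univ z)]
          rw [Finset.sum_congr rfl fun v _ => inner v]
          exact erase_eq _
        rw [e1, e2]
        ring
end star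


/-- sharp bound for the `1`-variation of the Hardy–Littlewood maximal
operator on the star graph `S_n`, `n ≥ 2`. -/
theorem starGraph_var_sharp_p_eq_one (n : ℕ) (hn : 2 ≤ n) :
    (∀ f : Fin n → ℝ,
        vp (starG n) 1 (mxHL (starG n) f) ≤ (1 - 1 / (n : ℝ)) * vp (starG n) 1 f) ∧
    (0 < vp (starG n) 1 (fun v => if v = ⟨1, by omega⟩ then (1 : ℝ) else 0) ∧
      vp (starG n) 1
          (mxHL (starG n) (fun v => if v = ⟨1, by omega⟩ then (1 : ℝ) else 0)) =
        (1 - 1 / (n : ℝ)) *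
          vp (starG n) 1 (fun v => if v = ⟨1, by omega⟩ then (1 : ℝ) else 0)) ∧
    sSup {c : ℝ | ∃ f : Fin n → ℝ, 0 < vp (starG n) 1 f ∧
        c = vp (starG n) 1 (mxHL (starG n) f) / vp (starG n) 1 f} = 1 - 1 / (n : ℝ) := by

  have h0 : (0:ℕ) < n := by omega
  have hn0 : (0:ℝ) < n := by positivity
  have h1n : 1/(n:ℝ) ≤ 1 := by
    rw [div_le_one hn0]
    exact_mod_cast (by omega : 1 ≤ n)
  have h1n0 : (0:ℝ) ≤ 1/(n:ℝ) := by positivity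
  have hcard : (((Finset.univ.erase (⟨0, h0⟩ : Fin n)).card : ℕ) : ℝ) = (n:ℝ) - 1 := by
    rw [Finset.card_erase_of_mem (Finset.mem_univ _), Finset.card_univ, Fintype.card_fin,
      Nat.cast_sub (by omega), Nat.cast_one]
  -- Part 1
  have part1 : ∀ f : Fin n → ℝ,
      vp (starG n) 1 (mxHL (starG n) f) ≤ (1 - 1 / (n : ℝ)) * vp (starG n) 1 f := by
    intro f
    rw [vp_star hn, vp_star hn]
    have hS : (∑ m : Fin n, |f m|)
        = |f (⟨0, h0⟩ : Fin n)| + ∑ j ∈ Finset.univ.erase (⟨0, h0⟩ : Fin n), |f j| :=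
      (Finset.add_sum_erase _ _ (Finset.mem_univ _)).symm
    have hrw : ∀ v ∈ Finset.univ.erase (⟨0, h0⟩ : Fin n),
        |mxHL (starG n) f v - mxHL (starG n) f ⟨0, h0⟩|
        = |max |f v| (max ((|f v| + |f (⟨0, h0⟩ : Fin n)|)/2)
            ((|f (⟨0, h0⟩ : Fin n)| + ∑ j ∈ Finset.univ.erase (⟨0, h0⟩ : Fin n), |f j|)/n))
          - max |f (⟨0, h0⟩ : Fin n)|
            ((|f (⟨0, h0⟩ : Fin n)| + ∑ j ∈ Finset.univ.erase (⟨0, h0⟩ : Fin n), |f j|)/n)| := by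
      intro v hv
      rw [mxHL_leaf hn f v (Finset.ne_of_mem_erase hv), mxHL_center hn f, hS]
    rw [Finset.sum_congr rfl hrw]
    have hkey := key_ineq (Finset.univ.erase (⟨0, h0⟩ : Fin n)) n hn hcard
      (fun i => |f i|) (fun i _ => abs_nonneg _) |f (⟨0, h0⟩ : Fin n)| (abs_nonneg _)
    refine le_trans hkey ?_
    apply mul_le_mul_of_nonneg_left
    · exact Finset.sum_le_sum fun v _ => abs_abs_sub_abs_le_abs_sub _ _
    · linarith
  -- the delta function
  set g : Fin n → ℝ := fun v => if v = ⟨1, by omega⟩ then (1 : ℝ) else 0 with hg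
  have hz1 : (⟨0, h0⟩ : Fin n) ≠ ⟨1, by omega⟩ := by
    intro h
    have := congrArg Fin.val h
    simp at this
  have hmem : (⟨1, by omega⟩ : Fin n) ∈ Finset.univ.erase (⟨0, h0⟩ : Fin n) :=
    Finset.mem_erase.mpr ⟨Ne.symm hz1, Finset.mem_univ _⟩
  have hgz : g ⟨0, h0⟩ = 0 := if_neg hz1
  have hg1 : g ⟨1, by omega⟩ = 1 := if_pos rfl
  have hgo : ∀ v : Fin n, v ≠ ⟨1, by omega⟩ → g v = 0 := fun v hv => if_neg hv
  have hSg : (∑ m : Fin n, |g m|) = 1 := by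
    rw [Finset.sum_eq_single_of_mem (⟨1, by omega⟩ : Fin n) (Finset.mem_univ _)
      (fun v _ hv => by rw [hgo v hv, abs_zero])]
    rw [hg1, abs_one]
  have hvpg : vp (starG n) 1 g = 1 := by
    rw [vp_star hn]
    rw [Finset.sum_eq_single_of_mem (⟨1, by omega⟩ : Fin n) hmem
      (fun v _ hv => by rw [hgo v hv, hgz, sub_zero, abs_zero])]
    rw [hg1, hgz, sub_zero, abs_one]
  have hvpMg : vp (starG n) 1 (mxHL (starG n) g) = 1 - 1/(n:ℝ) := by
    rw [vp_star hn]
    have hMz : mxHL (starG n) g ⟨0, h0⟩ = 1/(n:ℝ) := by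
      rw [mxHL_center hn g, hSg, hgz, abs_zero]
      exact max_eq_right h1n0
    rw [Finset.sum_eq_single_of_mem (⟨1, by omega⟩ : Fin n) hmem ?side]
    case side =>
      intro v hv hv1
      rw [mxHL_leaf hn g v (Finset.ne_of_mem_erase hv), hSg, hgo v hv1, hgz, hMz,
        abs_zero]
      have e1 : ((0:ℝ) + 0)/2 = 0 := by norm_num
      rw [e1, max_eq_right h1n0, max_eq_right h1n0, sub_self, abs_zero]
    · rw [mxHL_leaf hn g _ (Finset.ne_of_mem_erase hmem), hSg, hg1, hgz, hMz,
        abs_one, abs_zero]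
      have e1 : ((1:ℝ) + 0)/2 = 1/2 := by norm_num
      rw [e1, max_eq_left (max_le (by norm_num) h1n)]
      rw [abs_of_nonneg (by linarith)]
  refine ⟨part1, ⟨?_, ?_⟩, ?_⟩
  · show (0:ℝ) < vp (starG n) 1 g
    rw [hvpg]; norm_num
  · show vp (starG n) 1 (mxHL (starG n) g) = (1 - 1/(n:ℝ)) * vp (starG n) 1 g
    rw [hvpg, hvpMg]; ring
  · -- the supremum
    have hmemT : (1 - 1/(n:ℝ)) ∈ {c : ℝ | ∃ f : Fin n → ℝ, 0 < vp (starG n) 1 f ∧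
        c = vp (starG n) 1 (mxHL (starG n) f) / vp (starG n) 1 f} := by
      refine ⟨g, by rw [hvpg]; norm_num, ?_⟩
      rw [hvpg, hvpMg, div_one]
    have hub : ∀ c ∈ {c : ℝ | ∃ f : Fin n → ℝ, 0 < vp (starG n) 1 f ∧
        c = vp (starG n) 1 (mxHL (starG n) f) / vp (starG n) 1 f}, c ≤ 1 - 1/(n:ℝ) := by
      rintro c ⟨f, hf, rfl⟩
      rw [div_le_iff₀ hf]
      exact part1 f
    exact le_antisymm (csSup_le ⟨_, hmemT⟩ hub) (le_csSup ⟨_, hub⟩ hmemT)
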